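/- Let G be an Eulerian orientation of K_{m,n} (m, n even) with vertex classes A (|A| = m) and B (|B| = n), and let u, v be two distinct vertices of A. Let k denote the number of common out-neighbors of u and v. Then: (i) k also equals the number of common in-neighbors of u and v; (ii) the number of pairs of distinct vertices {b, b'} ⊆ B such that u, v, b, b' span a directed 4-cycle equals (n/2 − k)²; and (iii) the number of pairs {b, b'} ⊆ B such that u, v, b, b' span the orientation H₁ of the 4-cycle having two sources and two sinks equals 2·C(k,2) = k(k−1). -/

import Mathlib

open Finset

/-- An orientation of `K_{m,n}`: `o a b = true` means the edge between left vertex `a` and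
right vertex `b` is directed from `a` to `b`; it is Eulerian if every vertex has equal
indegree and outdegree. -/
def IsEulerianBip {m n : ℕ} (o : Fin m → Fin n → Bool) : Prop :=
  (∀ a : Fin m, 2 * (univ.filter fun b : Fin n => o a b = true).card = n) ∧
  (∀ b : Fin n, 2 * (univ.filter fun a : Fin m => o a b = true).card = m)

/-- The four arcs spanned by the distinct left vertices `a₁, a₂` and the distinct right
vertices `b₁, b₂` form the directed 4-cycle `a₁ → b₁ → a₂ → b₂ → a₁` or its reverse. -/
def SpansC4 {m n : ℕ} (o : Fin m → Fin n → Bool) (a₁ a₂ : Fin m) (b₁ b₂ : Fin n) : Prop :=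
  (o a₁ b₁ = true ∧ o a₂ b₁ = false ∧ o a₂ b₂ = true ∧ o a₁ b₂ = false) ∨
  (o a₁ b₁ = false ∧ o a₂ b₁ = true ∧ o a₂ b₂ = false ∧ o a₁ b₂ = true)

instance {m n : ℕ} (o : Fin m → Fin n → Bool) (a₁ a₂ : Fin m) (b₁ b₂ : Fin n) :
    Decidable (SpansC4 o a₁ a₂ b₁ b₂) := by
  unfold SpansC4; infer_instance

/-- The four arcs spanned by `a₁, a₂, b₁, b₂` form the orientation `H₁` of the undirected
4-cycle having two sources and two sinks: either both left vertices are sources (all four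
arcs point rightwards) or both right vertices are sources (all four arcs point leftwards). -/
def SpansH1 {m n : ℕ} (o : Fin m → Fin n → Bool) (a₁ a₂ : Fin m) (b₁ b₂ : Fin n) : Prop :=
  o a₁ b₁ = o a₂ b₁ ∧ o a₂ b₂ = o a₂ b₁ ∧ o a₁ b₂ = o a₂ b₁

instance {m n : ℕ} (o : Fin m → Fin n → Bool) (a₁ a₂ : Fin m) (b₁ b₂ : Fin n) :
    Decidable (SpansH1 o a₁ a₂ b₁ b₂) := by
  unfold SpansH1; infer_instance

/-- Let `G` be an Eulerian orientation of `K_{m,n}` (`m`, `n` even) and let `u ≠ v` be two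
left vertices, with `k` their number of common out-neighbors.  Then (i) `k` equals their
number of common in-neighbors, (ii) the number of pairs `{b, b'}` of right vertices such
that `u, v, b, b'` span a directed 4-cycle is `(n/2 − k)²`, and (iii) the number of pairs
`{b, b'}` such that `u, v, b, b'` span `H₁` is `2·C(k,2) = k(k−1)`. -/
lemma card_split_aux {n : ℕ} (p q : Fin n → Prop) [DecidablePred p] [DecidablePred q] :
    (univ.filter fun x => p x ∧ q x).card + (univ.filter fun x => p x ∧ ¬ q x).card
      = (univ.filter p).card := by
  rw [← Finset.filter_filter, ← Finset.filter_filter,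
    Finset.card_filter_add_card_filter_not]

lemma two_mul_card_lt {n : ℕ} (r : Fin n → Fin n → Prop)
    [∀ a b : Fin n, Decidable (r a b)] (hsym : ∀ a b, r a b → r b a) :
    2 * ((univ : Finset (Fin n × Fin n)).filter fun p => p.1 < p.2 ∧ r p.1 p.2).card
      = ((univ : Finset (Fin n × Fin n)).filter fun p => p.1 ≠ p.2 ∧ r p.1 p.2).card := by
  have hcard : ((univ : Finset (Fin n × Fin n)).filter fun p => p.2 < p.1 ∧ r p.1 p.2).card
      = ((univ : Finset (Fin n × Fin n)).filter fun p => p.1 < p.2 ∧ r p.1 p.2).card := by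
    refine Finset.card_bij' (fun p _ => (p.2, p.1)) (fun p _ => (p.2, p.1))
      ?_ ?_ (fun p _ => rfl) (fun p _ => rfl)
    · intro p hp
      simp only [mem_filter, mem_univ, true_and] at hp ⊢
      exact ⟨hp.1, hsym _ _ hp.2⟩
    · intro p hp
      simp only [mem_filter, mem_univ, true_and] at hp ⊢
      exact ⟨hp.1, hsym _ _ hp.2⟩
  have hunion : ((univ : Finset (Fin n × Fin n)).filter fun p => p.1 ≠ p.2 ∧ r p.1 p.2)
      = ((univ : Finset (Fin n × Fin n)).filter fun p => p.1 < p.2 ∧ r p.1 p.2)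
        ∪ ((univ : Finset (Fin n × Fin n)).filter fun p => p.2 < p.1 ∧ r p.1 p.2) := by
    ext p
    simp only [mem_filter, mem_univ, true_and, mem_union]
    constructor
    · rintro ⟨hne, hr⟩
      rcases lt_or_gt_of_ne hne with h | h
      · exact Or.inl ⟨h, hr⟩
      · exact Or.inr ⟨h, hr⟩
    · rintro (⟨h, hr⟩ | ⟨h, hr⟩)
      · exact ⟨ne_of_lt h, hr⟩
      · exact ⟨(ne_of_lt h).symm, hr⟩
  have hdisj : Disjoint
      ((univ : Finset (Fin n × Fin n)).filter fun p => p.1 < p.2 ∧ r p.1 p.2)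
      ((univ : Finset (Fin n × Fin n)).filter fun p => p.2 < p.1 ∧ r p.1 p.2) := by
    rw [Finset.disjoint_filter]
    rintro p _ ⟨h1, _⟩ ⟨h2, _⟩
    exact absurd h1 (not_lt_of_gt h2)
  rw [hunion, Finset.card_union_of_disjoint hdisj, hcard]
  ring

theorem common_neighbors_C4_H1_count (m n : ℕ) (hm : Even m) (hn : Even n)
    (o : Fin m → Fin n → Bool) (ho : IsEulerianBip o) (u v : Fin m) (huv : u ≠ v)
    (k : ℕ) (hk : k = (univ.filter fun b : Fin n => o u b = true ∧ o v b = true).card) :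
    k = (univ.filter fun b : Fin n => o u b = false ∧ o v b = false).card ∧
    ((((univ : Finset (Fin n × Fin n)).filter fun p =>
        p.1 < p.2 ∧ SpansC4 o u v p.1 p.2).card : ℝ) = ((n : ℝ) / 2 - (k : ℝ)) ^ 2) ∧
    (((univ : Finset (Fin n × Fin n)).filter fun p =>
        p.1 < p.2 ∧ SpansH1 o u v p.1 p.2).card = k * (k - 1)) := by
  classical
  set TT := univ.filter fun b : Fin n => o u b = true ∧ o v b = true with hTT
  set TF := univ.filter fun b : Fin n => o u b = true ∧ o v b = false with hTF
  set FT := univ.filter fun b : Fin n => o u b = false ∧ o v b = true with hFT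
  set FF := univ.filter fun b : Fin n => o u b = false ∧ o v b = false with hFF
  -- basic cardinality relations
  have hu : 2 * (TT.card + TF.card) = n := by
    have h := card_split_aux (fun b : Fin n => o u b = true) (fun b : Fin n => o v b = true)
    have he : (univ.filter fun b : Fin n => o u b = true ∧ ¬ o v b = true) = TF := by
      apply Finset.filter_congr
      intro b _
      simp [Bool.not_eq_true]
    rw [he] at h
    rw [← hTT] at h
    rw [h]
    exact ho.1 u
  have hv : 2 * (TT.card + FT.card) = n := by
    have h := card_split_aux (fun b : Fin n => o v b = true) (fun b : Fin n => o u b = true)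
    have he1 : (univ.filter fun b : Fin n => o v b = true ∧ o u b = true) = TT := by
      apply Finset.filter_congr
      intro b _
      exact and_comm
    have he2 : (univ.filter fun b : Fin n => o v b = true ∧ ¬ o u b = true) = FT := by
      apply Finset.filter_congr
      intro b _
      simp [Bool.not_eq_true, and_comm]
    rw [he1, he2] at h
    rw [h]
    exact ho.1 v
  have htot : TT.card + TF.card + (FT.card + FF.card) = n := by
    have h1 := card_split_aux (fun b : Fin n => o u b = true) (fun b : Fin n => o v b = true)
    have h2 := card_split_aux (fun b : Fin n => ¬ o u b = true) (fun b : Fin n => o v b = true)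
    have he1 : (univ.filter fun b : Fin n => o u b = true ∧ ¬ o v b = true) = TF := by
      apply Finset.filter_congr; intro b _; simp [Bool.not_eq_true]
    have he2 : (univ.filter fun b : Fin n => ¬ o u b = true ∧ o v b = true) = FT := by
      apply Finset.filter_congr; intro b _; simp [Bool.not_eq_true]
    have he3 : (univ.filter fun b : Fin n => ¬ o u b = true ∧ ¬ o v b = true) = FF := by
      apply Finset.filter_congr; intro b _; simp [Bool.not_eq_true]
    have h3 := Finset.card_filter_add_card_filter_not
      (s := (univ : Finset (Fin n))) (p := fun b : Fin n => o u b = true)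
    rw [he1, ← hTT] at h1
    rw [he2, he3] at h2
    rw [Finset.card_univ, Fintype.card_fin] at h3
    omega
  have hkTF : k + TF.card = n / 2 := by omega
  have hTFFT : TF.card = FT.card := by omega
  have hkFF : k = FF.card := by omega
  refine ⟨hkFF, ?_, ?_⟩
  -- C4 count
  · have hsym : ∀ b₁ b₂ : Fin n, SpansC4 o u v b₁ b₂ → SpansC4 o u v b₂ b₁ := by
      intro b₁ b₂ h
      unfold SpansC4 at h ⊢
      tauto
    have h2 : 2 * ((univ : Finset (Fin n × Fin n)).filter fun p =>
        p.1 < p.2 ∧ SpansC4 o u v p.1 p.2).card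
        = ((univ : Finset (Fin n × Fin n)).filter fun p =>
        p.1 ≠ p.2 ∧ SpansC4 o u v p.1 p.2).card := two_mul_card_lt _ hsym
    have hset : ((univ : Finset (Fin n × Fin n)).filter fun p =>
        p.1 ≠ p.2 ∧ SpansC4 o u v p.1 p.2) = TF ×ˢ FT ∪ FT ×ˢ TF := by
      ext p
      simp only [mem_filter, mem_univ, true_and, mem_union, Finset.mem_product,
        hTF, hFT, mem_filter]
      constructor
      · rintro ⟨hne, h | h⟩
        · exact Or.inl ⟨⟨h.1, h.2.1⟩, ⟨h.2.2.2, h.2.2.1⟩⟩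
        · exact Or.inr ⟨⟨h.1, h.2.1⟩, ⟨h.2.2.2, h.2.2.1⟩⟩
      · rintro (⟨⟨h1, h2⟩, ⟨h3, h4⟩⟩ | ⟨⟨h1, h2⟩, ⟨h3, h4⟩⟩)
        · refine ⟨?_, Or.inl ⟨h1, h2, h4, h3⟩⟩
          intro he; rw [he] at h1; rw [h1] at h3; exact absurd h3 (by simp)
        · refine ⟨?_, Or.inr ⟨h1, h2, h4, h3⟩⟩
          intro he; rw [he] at h1; rw [h1] at h3; exact absurd h3 (by simp)
    have hdisj : Disjoint (TF ×ˢ FT) (FT ×ˢ TF) := by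
      rw [Finset.disjoint_left]
      rintro p hp hp'
      rw [Finset.mem_product] at hp hp'
      have h1 := hp.1; have h2 := hp'.1
      rw [hTF, mem_filter] at h1
      rw [hFT, mem_filter] at h2
      rw [h1.2.1] at h2
      exact absurd h2.2.1 (by simp)
    rw [hset, Finset.card_union_of_disjoint hdisj, Finset.card_product,
      Finset.card_product, ← hTFFT] at h2
    have hcardeq : ((univ : Finset (Fin n × Fin n)).filter fun p =>
        p.1 < p.2 ∧ SpansC4 o u v p.1 p.2).card = TF.card * TF.card := by omega
    rw [hcardeq]
    have hu' : 2 * (k + TF.card) = n := by omega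
    have hn' : (n : ℝ) = 2 * ((k : ℝ) + (TF.card : ℝ)) := by
      exact_mod_cast hu'.symm
    push_cast
    rw [hn']
    ring
  -- H1 count
  · have hsym : ∀ b₁ b₂ : Fin n, SpansH1 o u v b₁ b₂ → SpansH1 o u v b₂ b₁ := by
      intro b₁ b₂ ⟨h1, h2, h3⟩
      exact ⟨h3.trans h2.symm, h2.symm ▸ rfl, h1.trans h2.symm⟩
    have h2 : 2 * ((univ : Finset (Fin n × Fin n)).filter fun p =>
        p.1 < p.2 ∧ SpansH1 o u v p.1 p.2).card
        = ((univ : Finset (Fin n × Fin n)).filter fun p =>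
        p.1 ≠ p.2 ∧ SpansH1 o u v p.1 p.2).card := two_mul_card_lt _ hsym
    have hset : ((univ : Finset (Fin n × Fin n)).filter fun p =>
        p.1 ≠ p.2 ∧ SpansH1 o u v p.1 p.2) = TT.offDiag ∪ FF.offDiag := by
      ext p
      simp only [mem_filter, mem_univ, true_and, mem_union, Finset.mem_offDiag,
        hTT, hFF, mem_filter]
      simp only [SpansH1]
      constructor
      · rintro ⟨hne, h1, h2, h3⟩
        rcases Bool.eq_false_or_eq_true (o v p.1) with hb | hb
        · rw [hb] at h1 h2 h3
          exact Or.inl ⟨⟨h1, hb⟩, ⟨h3, h2⟩, hne⟩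
        · rw [hb] at h1 h2 h3
          exact Or.inr ⟨⟨h1, hb⟩, ⟨h3, h2⟩, hne⟩
      · rintro (⟨⟨a1, a2⟩, ⟨a3, a4⟩, hne⟩ | ⟨⟨a1, a2⟩, ⟨a3, a4⟩, hne⟩) <;>
          exact ⟨hne, by rw [a1, a2, a3, a4]; exact ⟨rfl, rfl, rfl⟩⟩
    have hdisj : Disjoint TT.offDiag FF.offDiag := by
      rw [Finset.disjoint_left]
      rintro p hp hp'
      rw [Finset.mem_offDiag] at hp hp'
      have h1 := hp.1; have h2 := hp'.1
      rw [hTT, mem_filter] at h1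
      rw [hFF, mem_filter] at h2
      rw [h1.2.1] at h2
      exact absurd h2.2.1 (by simp)
    rw [hset, Finset.card_union_of_disjoint hdisj, Finset.offDiag_card,
      Finset.offDiag_card, ← hk, ← hkFF] at h2
    have hq : k * (k - 1) = k * k - k := by
      cases k with
      | zero => rfl
      | succ t => rw [Nat.succ_sub_one, Nat.mul_succ, Nat.add_sub_cancel]
    have hkk : k ≤ k * k := by
      rcases Nat.eq_zero_or_pos k with h | h
      · simp [h]
      · exact Nat.le_mul_of_pos_left k h
    rw [hq]
    omega
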